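/- A subgroup of finite exponent of an abelian group of cofinite type is finite. -/

import Mathlib

lemma addCircle_torsion_finite (m : ℕ) (hm : 0 < m) :
    {u : AddCircle (1 : ℚ) | m • u = 0}.Finite := by
  have hsub : {u : AddCircle (1 : ℚ) | m • u = 0} ⊆
      ⋃ d ∈ m.divisors, {u : AddCircle (1 : ℚ) | addOrderOf u = d} := by
    intro u hu
    have hfin : IsOfFinAddOrder u := isOfFinAddOrder_iff_nsmul_eq_zero.2 ⟨m, hm, hu⟩
    have hdvd : addOrderOf u ∣ m := addOrderOf_dvd_of_nsmul_eq_zero hu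
    exact Set.mem_biUnion (Nat.mem_divisors.2 ⟨hdvd, hm.ne'⟩) rfl
  refine Set.Finite.subset (Set.Finite.biUnion (Set.finite_Iic m |>.subset
    (fun d hd => Nat.divisor_le hd)) ?_) hsub
  intro d hd
  exact AddCircle.finite_setOfPred_addOrderOf_eq (1 : ℚ) (Nat.pos_of_mem_divisors hd)

/-- A subgroup of finite exponent of an abelian group of cofinite type is finite. -/
theorem finite_subgroup_of_finiteExponent_of_cofiniteType
    {A : Type*} [AddCommGroup A]
    (n : ℕ) (F : Type*) [AddCommGroup F] [Finite F]
    (j : A →+ (Fin n → AddCircle (1 : ℚ)) × F) (hj : Function.Injective j)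
    (S : AddSubgroup A) (m : ℕ) (hm : 0 < m) (hS : ∀ s ∈ S, m • s = 0) :
    Finite S := by
  have hfin : ({u : AddCircle (1 : ℚ) | m • u = 0}).Finite := addCircle_torsion_finite m hm
  haveI : Finite {u : AddCircle (1 : ℚ) // m • u = 0} := hfin.to_subtype
  set T : Type _ := (Fin n → {u : AddCircle (1 : ℚ) // m • u = 0}) × F
  haveI : Finite T := by infer_instance
  have key : ∀ s : S, ∀ i : Fin n, m • (j (s : A)).1 i = 0 := by
    intro s i
    have h1 : m • (s : A) = 0 := hS s s.2
    have h2 : j (m • (s : A)) = 0 := by rw [h1]; exact map_zero j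
    rw [map_nsmul] at h2
    have h3 : m • (j (s : A)).1 = 0 := congrArg Prod.fst h2
    exact congrFun h3 i
  set f : S → T := fun s => (fun i => ⟨(j (s : A)).1 i, key s i⟩, (j (s : A)).2)
  have hf : Function.Injective f := by
    intro a b hab
    have h1 : (j (a : A)).1 = (j (b : A)).1 := by
      funext i
      exact congrArg Subtype.val (congrFun (congrArg Prod.fst hab) i)
    have h2 : (j (a : A)).2 = (j (b : A)).2 := congrArg (fun t : T => t.2) hab
    have : j (a : A) = j (b : A) := Prod.ext h1 h2
    exact Subtype.ext (hj this)
  exact Finite.of_injective f hf
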